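/- Fix integers N ≥ 1 and T ≥ 1, positive real constants τ, W, N₀, positive channel gains h_t^(i) > 0, and positive energy budgets E_i > 0. Suppose e ∈ F is a simultaneous best response for all users: for every user i, the vector (e_t^(i))_{t=1}^T maximizes x ↦ Σ_{t=1}^T τ·W·log₂(1 + (h_t^(i)·x_t + Σ_{n≠i} h_t^(n)·e_t^(n))/(τ·N₀)) over {x ∈ ℝ^T : x_t ≥ 0, Σ_{t=1}^T x_t = E_i}. Then e is a global maximizer of J over F: J(e) ≥ J(e') for all e' ∈ F. -/

import Mathlib

open Finset

/-- Concavity-type inequality: `log (c+b) - log (c+a) ≤ (b-a)/(c+a)`. -/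
lemma stmt_11_logA {c a b : ℝ} (hc : 0 < c) (ha : 0 ≤ a) (hb : 0 ≤ b) :
    Real.log (c + b) - Real.log (c + a) ≤ (b - a) / (c + a) := by
  have hca : 0 < c + a := by linarith
  have hcb : 0 < c + b := by linarith
  have h1 : Real.log ((c + b) / (c + a)) ≤ (c + b) / (c + a) - 1 :=
    Real.log_le_sub_one_of_pos (by positivity)
  rw [Real.log_div hcb.ne' hca.ne'] at h1
  have h2 : (c + b) / (c + a) - 1 = (b - a) / (c + a) := by field_simp; ring
  linarith

/-- Any fixed point of the per-user water-filling updates (a simultaneous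
best response for every user, treating the others' signals as noise) is a
global maximizer of the joint offline sum-throughput. -/
theorem stmt_11
    (N T : ℕ) (hN : 1 ≤ N) (hT : 1 ≤ T)
    (τ W N₀ : ℝ) (hτ : 0 < τ) (hW : 0 < W) (hN₀ : 0 < N₀)
    (h : Fin N → Fin T → ℝ) (hh : ∀ i t, 0 < h i t)
    (E : Fin N → ℝ) (hE : ∀ i, 0 < E i)
    (e : Fin N → Fin T → ℝ)
    (hpos : ∀ i t, 0 ≤ e i t) (hsum : ∀ i, ∑ t, e i t = E i)
    (hbr : ∀ i : Fin N, ∀ x : Fin T → ℝ, (∀ t, 0 ≤ x t) → (∑ t, x t = E i) →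
      ∑ t, τ * W * Real.logb 2 (1 +
          (h i t * x t + ∑ n ∈ univ.erase i, h n t * e n t) / (τ * N₀)) ≤
        ∑ t, τ * W * Real.logb 2 (1 +
          (h i t * e i t + ∑ n ∈ univ.erase i, h n t * e n t) / (τ * N₀))) :
    ∀ e' : Fin N → Fin T → ℝ,
      (∀ i t, 0 ≤ e' i t) → (∀ i, ∑ t, e' i t = E i) →
      ∑ t, τ * W * Real.logb 2 (1 + (1 / (τ * N₀)) * ∑ i, h i t * e' i t) ≤
        ∑ t, τ * W * Real.logb 2 (1 + (1 / (τ * N₀)) * ∑ i, h i t * e i t) := by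
  intro e' hpos' hsum'
  have hc : 0 < τ * N₀ := mul_pos hτ hN₀
  set c : ℝ := τ * N₀ with hc_def
  have hlog2 : 0 < Real.log 2 := Real.log_pos one_lt_two
  set S : Fin T → ℝ := fun t => ∑ n, h n t * e n t with hS_def
  set S' : Fin T → ℝ := fun t => ∑ n, h n t * e' n t with hS'_def
  have hS0 : ∀ t, 0 ≤ S t := fun t =>
    Finset.sum_nonneg fun n _ => mul_nonneg (hh n t).le (hpos n t)
  have hS'0 : ∀ t, 0 ≤ S' t := fun t =>
    Finset.sum_nonneg fun n _ => mul_nonneg (hh n t).le (hpos' n t)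
  set D : ℝ := τ * W / Real.log 2 with hD_def
  have hD : 0 < D := by positivity
  have hlogb : ∀ s : ℝ, 0 ≤ s →
      τ * W * Real.logb 2 (1 + s / c) = D * (Real.log (c + s) - Real.log c) := by
    intro s hs
    have h1 : 1 + s / c = (c + s) / c := by field_simp
    rw [Real.logb, h1, Real.log_div (by positivity) hc.ne', hD_def]
    ring
  -- Step 2: first-order condition for each user
  have key : ∀ i : Fin N, ∑ t, h i t * (e' i t - e i t) / (c + S t) ≤ 0 := by
    intro i
    set a : Fin T → ℝ := fun t => h i t * (e' i t - e i t) with ha_def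
    set R : Fin T → ℝ := fun t => ∑ n ∈ univ.erase i, h n t * e n t with hR_def
    have hR0 : ∀ t, 0 ≤ R t := fun t =>
      Finset.sum_nonneg fun n _ => mul_nonneg (hh n t).le (hpos n t)
    have hSR : ∀ t, S t = h i t * e i t + R t := fun t =>
      (Finset.add_sum_erase univ (fun n => h n t * e n t) (mem_univ i)).symm
    have hφ : ∀ θ ∈ Set.Ioc (0:ℝ) 1, ∑ t, a t / (c + S t + θ * a t) ≤ 0 := by
      intro θ hθ
      obtain ⟨hθ0, hθ1⟩ := hθ
      set x : Fin T → ℝ := fun t => e i t + θ * (e' i t - e i t) with hx_def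
      have hx0 : ∀ t, 0 ≤ x t := by
        intro t
        have hxt : x t = (1 - θ) * e i t + θ * e' i t := by
          simp only [hx_def]; ring
        rw [hxt]
        have := hpos i t
        have := hpos' i t
        nlinarith
      have hxsum : ∑ t, x t = E i := by
        simp only [hx_def]
        rw [Finset.sum_add_distrib, ← Finset.mul_sum, Finset.sum_sub_distrib,
          hsum i, hsum' i]
        ring
      have hb := hbr i x hx0 hxsum
      have harg : ∀ t, h i t * x t + R t = S t + θ * a t := by
        intro t
        rw [hSR t]; simp only [hx_def, ha_def]; ring
      have hpos2 : ∀ t, 0 ≤ S t + θ * a t := by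
        intro t
        rw [← harg t]
        exact add_nonneg (mul_nonneg (hh i t).le (hx0 t)) (hR0 t)
      -- rewrite hb with hlogb
      have hb2 : ∑ t, D * (Real.log (c + (S t + θ * a t)) - Real.log c) ≤
          ∑ t, D * (Real.log (c + S t) - Real.log c) := by
        calc ∑ t, D * (Real.log (c + (S t + θ * a t)) - Real.log c)
            = ∑ t, τ * W * Real.logb 2 (1 + (h i t * x t + R t) / c) := by
              refine Finset.sum_congr rfl fun t _ => ?_
              rw [harg t, hlogb _ (hpos2 t)]
          _ ≤ ∑ t, τ * W * Real.logb 2 (1 + (h i t * e i t + R t) / c) := hb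
          _ = ∑ t, D * (Real.log (c + S t) - Real.log c) := by
              refine Finset.sum_congr rfl fun t _ => ?_
              rw [← hSR t, hlogb _ (hS0 t)]
      have hb3 : ∑ t, (Real.log (c + (S t + θ * a t)) - Real.log (c + S t)) ≤ 0 := by
        have h4 : ∑ t, D * (Real.log (c + (S t + θ * a t)) - Real.log (c + S t)) ≤ 0 := by
          have := sub_nonpos.mpr hb2
          rw [← Finset.sum_sub_distrib] at this
          calc ∑ t, D * (Real.log (c + (S t + θ * a t)) - Real.log (c + S t))
              = ∑ t, (D * (Real.log (c + (S t + θ * a t)) - Real.log c)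
                  - D * (Real.log (c + S t) - Real.log c)) := by
                refine Finset.sum_congr rfl fun t _ => ?_; ring
            _ ≤ 0 := this
        rw [← Finset.mul_sum] at h4
        exact nonpos_of_mul_nonpos_right h4 hD
      -- lower bound each log increment
      have h5 : ∑ t, θ * (a t / (c + S t + θ * a t)) ≤
          ∑ t, (Real.log (c + (S t + θ * a t)) - Real.log (c + S t)) := by
        refine Finset.sum_le_sum fun t _ => ?_
        have hlb := stmt_11_logA hc (hpos2 t) (hS0 t)
        have heq : θ * (a t / (c + S t + θ * a t)) = -((S t - (S t + θ * a t)) / (c + (S t + θ * a t))) := by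
          rw [add_assoc]
          field_simp
          ring
        rw [heq]
        linarith [hlb]
      rw [← Finset.mul_sum] at h5
      have h6 : θ * ∑ t, a t / (c + S t + θ * a t) ≤ 0 := le_trans h5 hb3
      exact nonpos_of_mul_nonpos_right (by linarith) hθ0
    -- take the limit θ → 0⁺
    have hden : ∀ t, 0 < c + S t := fun t => by have := hS0 t; linarith
    have htend : Filter.Tendsto (fun θ : ℝ => ∑ t, a t / (c + S t + θ * a t))
        (nhdsWithin 0 (Set.Ioi 0)) (nhds (∑ t, a t / (c + S t))) := by
      have : Filter.Tendsto (fun θ : ℝ => ∑ t, a t / (c + S t + θ * a t))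
          (nhds 0) (nhds (∑ t, a t / (c + S t + 0 * a t))) := by
        apply tendsto_finset_sum
        intro t _
        apply Filter.Tendsto.div tendsto_const_nhds
        · exact (Continuous.tendsto (by continuity) 0)
        · simp only [zero_mul, add_zero]; exact (hden t).ne'
      simpa using this.mono_left nhdsWithin_le_nhds
    refine le_of_tendsto htend ?_
    filter_upwards [Ioc_mem_nhdsGT_of_mem (Set.left_mem_Ico.mpr one_pos)] with θ hθ
    exact hφ θ hθ
  -- Step 1 + conclusion
  have main : ∑ t, τ * W * Real.logb 2 (1 + 1 / c * S' t) -
      ∑ t, τ * W * Real.logb 2 (1 + 1 / c * S t) ≤ 0 := by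
    rw [← Finset.sum_sub_distrib]
    calc ∑ t, (τ * W * Real.logb 2 (1 + 1 / c * S' t) -
          τ * W * Real.logb 2 (1 + 1 / c * S t))
        = ∑ t, D * (Real.log (c + S' t) - Real.log (c + S t)) := by
          refine Finset.sum_congr rfl fun t _ => ?_
          rw [show (1:ℝ) / c * S' t = S' t / c by ring,
            show (1:ℝ) / c * S t = S t / c by ring,
            hlogb _ (hS'0 t), hlogb _ (hS0 t)]
          ring
      _ ≤ ∑ t, D * ((S' t - S t) / (c + S t)) := by
          refine Finset.sum_le_sum fun t _ => ?_
          exact mul_le_mul_of_nonneg_left (stmt_11_logA hc (hS0 t) (hS'0 t)) hD.le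
      _ = D * ∑ i, ∑ t, h i t * (e' i t - e i t) / (c + S t) := by
          rw [← Finset.mul_sum, Finset.sum_comm]
          congr 1
          refine Finset.sum_congr rfl fun t _ => ?_
          rw [← Finset.sum_div]
          congr 1
          rw [hS_def, hS'_def, ← Finset.sum_sub_distrib]
          exact Finset.sum_congr rfl fun n _ => by ring
      _ ≤ 0 := by
          have hsumkey : ∑ i, ∑ t, h i t * (e' i t - e i t) / (c + S t) ≤ 0 :=
            Finset.sum_nonpos fun i _ => key i
          exact mul_nonpos_of_nonneg_of_nonpos hD.le hsumkey
  linarith [main]
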